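/- Let R be a finite commutative ring, n > 0, and let a(x) = a_k x^k + a_0, b(x) = b_k x^k + b_0 with 0 < k < n and all coefficients units. If there exists α ∈ Rˣ with b_k·α^(n−k) = a_k and b_0·α^n = a_0, then the map f(x) ↦ f(α x) induces a well-defined R-algebra isomorphism R[x]/⟨x^n − a(x)⟩ → R[x]/⟨x^n − b(x)⟩. -/

import Mathlib

open Polynomial AdjoinRoot

theorem stmt_4 (R : Type*) [CommRing R] [Fintype R] (n k : ℕ) (hn : 0 < n)
    (hk : 0 < k) (hkn : k < n)
    (a_k a_0 b_k b_0 : R) (hak : IsUnit a_k) (ha0 : IsUnit a_0)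
    (hbk : IsUnit b_k) (hb0 : IsUnit b_0)
    (α : Rˣ) (h1 : b_k * (α : R) ^ (n - k) = a_k) (h2 : b_0 * (α : R) ^ n = a_0) :
    ∃ φ : AdjoinRoot (X ^ n - (C a_k * X ^ k + C a_0)) ≃ₐ[R]
          AdjoinRoot (X ^ n - (C b_k * X ^ k + C b_0)),
      ∀ f : R[X],
        φ (AdjoinRoot.mk _ f) = AdjoinRoot.mk _ (f.comp (C (α : R) * X)) := by
  set p : R[X] := X ^ n - (C a_k * X ^ k + C a_0) with hp
  set q : R[X] := X ^ n - (C b_k * X ^ k + C b_0) with hq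
  set β : R := ((α⁻¹ : Rˣ) : R) with hβ
  have hba : β * (α : R) = 1 := Units.inv_mul α
  have hpow : (α : R) ^ (n - k) * (α : R) ^ k = (α : R) ^ n := by
    rw [← pow_add, Nat.sub_add_cancel hkn.le]
  have hqroot : (root q) ^ n = of q b_k * (root q) ^ k + of q b_0 := by
    have h0 : aeval (root q) q = 0 := by rw [aeval_eq, mk_self]
    rw [hq] at h0
    simp only [map_sub, map_add, map_mul, map_pow, aeval_X, aeval_C, sub_eq_zero,
      AdjoinRoot.algebraMap_eq] at h0
    exact h0
  have hproot : (root p) ^ n = of p a_k * (root p) ^ k + of p a_0 := by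
    have h0 : aeval (root p) p = 0 := by rw [aeval_eq, mk_self]
    rw [hp] at h0
    simp only [map_sub, map_add, map_mul, map_pow, aeval_X, aeval_C, sub_eq_zero,
      AdjoinRoot.algebraMap_eq] at h0
    exact h0
  have ekk : (α : R) ^ n * b_k = a_k * (α : R) ^ k := by
    rw [← h1, ← hpow]; ring
  have e0 : (α : R) ^ n * b_0 = a_0 := by rw [← h2]; ring
  have ekk' : β ^ n * a_k = b_k * β ^ k := by
    calc β ^ n * a_k = β ^ (n - k) * β ^ k * (b_k * (α : R) ^ (n - k)) := by
          rw [← h1, ← pow_add, Nat.sub_add_cancel hkn.le]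
      _ = b_k * ((β * (α : R)) ^ (n - k) * β ^ k) := by rw [mul_pow]; ring
      _ = b_k * β ^ k := by rw [hba, one_pow, one_mul]
  have e0' : β ^ n * a_0 = b_0 := by
    calc β ^ n * a_0 = b_0 * (β * (α : R)) ^ n := by rw [← h2, mul_pow]; ring
      _ = b_0 := by rw [hba, one_pow, mul_one]
  have hfwd : aeval (of q (α : R) * root q) p = 0 := by
    rw [hp]
    simp only [map_sub, map_add, map_mul, map_pow, aeval_X, aeval_C, sub_eq_zero,
      AdjoinRoot.algebraMap_eq]
    calc (of q (α : R) * root q) ^ n = of q ((α : R) ^ n) * root q ^ n := by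
          rw [mul_pow, map_pow]
      _ = of q ((α : R) ^ n * b_k) * root q ^ k + of q ((α : R) ^ n * b_0) := by
          rw [hqroot, map_mul, map_mul]; ring
      _ = of q (a_k * (α : R) ^ k) * root q ^ k + of q a_0 := by rw [ekk, e0]
      _ = of q a_k * (of q (α : R) * root q) ^ k + of q a_0 := by
          rw [map_mul, mul_pow, map_pow]; ring
  have hbwd : aeval (of p β * root p) q = 0 := by
    rw [hq]
    simp only [map_sub, map_add, map_mul, map_pow, aeval_X, aeval_C, sub_eq_zero,
      AdjoinRoot.algebraMap_eq]
    calc (of p β * root p) ^ n = of p (β ^ n) * root p ^ n := by rw [mul_pow, map_pow]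
      _ = of p (β ^ n * a_k) * root p ^ k + of p (β ^ n * a_0) := by
          rw [hproot, map_mul, map_mul]; ring
      _ = of p (b_k * β ^ k) * root p ^ k + of p b_0 := by rw [ekk', e0']
      _ = of p b_k * (of p β * root p) ^ k + of p b_0 := by
          rw [map_mul, mul_pow, map_pow]; ring
  let F : AdjoinRoot p →ₐ[R] AdjoinRoot q := liftAlgHom p (Algebra.ofId R _) (of q (α : R) * root q)
    (by rw [← hfwd, aeval_def]; rfl)
  let G : AdjoinRoot q →ₐ[R] AdjoinRoot p := liftAlgHom q (Algebra.ofId R _) (of p β * root p)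
    (by rw [← hbwd, aeval_def]; rfl)
  have hFG : F.comp G = AlgHom.id R _ := by
    apply AdjoinRoot.algHom_ext
    simp only [AlgHom.coe_comp, Function.comp_apply, liftAlgHom_root, AlgHom.id_apply, F, G]
    rw [map_mul, liftAlgHom_root, liftAlgHom_of, Algebra.ofId_apply, AdjoinRoot.algebraMap_eq, ← mul_assoc, ← map_mul,
      hba, map_one, one_mul]
  have hGF : G.comp F = AlgHom.id R _ := by
    apply AdjoinRoot.algHom_ext
    simp only [AlgHom.coe_comp, Function.comp_apply, liftAlgHom_root, AlgHom.id_apply, F, G]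
    rw [map_mul, liftAlgHom_root, liftAlgHom_of, Algebra.ofId_apply, AdjoinRoot.algebraMap_eq, ← mul_assoc, ← map_mul,
      mul_comm (α : R) β, hba, map_one, one_mul]
  refine ⟨AlgEquiv.ofAlgHom F G hFG hGF, fun f => ?_⟩
  show F (mk p f) = mk q (f.comp (C (α : R) * X))
  rw [liftAlgHom_mk]
  change aeval (of q (α : R) * root q) f = _
  rw [ ← AdjoinRoot.aeval_eq, aeval_comp]
  simp [AdjoinRoot.algebraMap_eq]
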